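/- Let F ∈ L²(μ) and let n, m be nonnegative integers with Δ_{n,m}(F,μ) ≠ 0. Then there exists a solution (P,Q) of the (n,m) Padé-orthogonal problem for F with Q monic of degree m, this pair (P,Q) is unique, and any other solution (P',Q') of the problem satisfies P'·Q = P·Q' (i.e., it determines the same rational function [n/m]_F^μ = P/Q). -/

import Mathlib

open MeasureTheory Polynomial Filter Topology Set
open scoped ENNReal

/-- The inner product `⟨g,h⟩_μ := ∫ g(ζ)·conj(h(ζ)) dμ(ζ)`. -/
noncomputable def innerMu (μ : Measure ℂ) (g h : ℂ → ℂ) : ℂ :=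
  ∫ ζ, g ζ * (starRingEnd ℂ) (h ζ) ∂μ

/-- The (topological) support of a measure on `ℂ`: the set of points all of whose
neighborhoods have positive measure. -/
def measSupp (μ : Measure ℂ) : Set ℂ :=
  {z : ℂ | ∀ U ∈ nhds z, μ U ≠ 0}

/-- The second type functions `s_n(z) := ∫ conj(p_n(ζ))/(z − ζ) dμ(ζ)`. -/
noncomputable def secondKind (μ : Measure ℂ) (p : ℕ → Polynomial ℂ) (n : ℕ) (z : ℂ) : ℂ :=
  ∫ ζ, (starRingEnd ℂ) ((p n).eval ζ) / (z - ζ) ∂μ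

/-- `(P,Q)` is a solution of the `(n,m)` Padé-orthogonal problem for `F` with respect to
`μ`: `deg P ≤ n`, `deg Q ≤ m`, `Q ≢ 0`, and `⟨QF − P, p_j⟩_μ = 0` for `j = 0,…,n+m`. -/
def IsPadeSol (μ : Measure ℂ) (p : ℕ → Polynomial ℂ) (F : ℂ → ℂ) (n m : ℕ)
    (P Q : Polynomial ℂ) : Prop :=
  P.degree ≤ n ∧ Q.degree ≤ m ∧ Q ≠ 0 ∧
  ∀ j : ℕ, j ≤ n + m →
    innerMu μ (fun z => Q.eval z * F z - P.eval z) (fun z => (p j).eval z) = 0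

/-- `Δ_{n,m}(F,μ)`: the determinant of the `m×m` matrix whose `(i,j)` entry (with
`1`-based indexing) is `⟨z^{j−1}F, p_{n+i}⟩_μ`. -/
noncomputable def Delta (μ : Measure ℂ) (p : ℕ → Polynomial ℂ) (F : ℂ → ℂ) (n m : ℕ) : ℂ :=
  Matrix.det (Matrix.of fun i j : Fin m =>
    innerMu μ (fun z => z ^ (j : ℕ) * F z) (fun z => (p (n + 1 + i)).eval z))

lemma measSupp_compl_null (μ : Measure ℂ) : μ (measSupp μ)ᶜ = 0 := by
  apply measure_null_of_locally_null
  intro x hx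
  simp only [measSupp, mem_compl_iff, mem_setOf_eq, not_forall, not_ne_iff] at hx
  obtain ⟨U, hU, hU0⟩ := hx
  exact ⟨(measSupp μ)ᶜ ∩ U, inter_mem_nhdsWithin _ hU,
    measure_mono_null inter_subset_right hU0⟩

lemma ae_mem_measSupp (μ : Measure ℂ) : ∀ᵐ z ∂μ, z ∈ measSupp μ := by
  rw [ae_iff]
  exact measure_mono_null (fun z hz => hz) (measSupp_compl_null μ)

lemma poly_memLtop (μ : Measure ℂ) (hsuppC : IsCompact (measSupp μ)) (R : Polynomial ℂ) :
    MemLp (fun z => R.eval z) ⊤ μ := by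
  obtain ⟨C, hC⟩ := hsuppC.exists_bound_of_continuousOn R.continuous.continuousOn
  exact memLp_top_of_bound R.continuous.aestronglyMeasurable C
    ((ae_mem_measSupp μ).mono fun z hz => hC z hz)

lemma poly_memL2 (μ : Measure ℂ) [IsFiniteMeasure μ] (hsuppC : IsCompact (measSupp μ))
    (R : Polynomial ℂ) : MemLp (fun z => R.eval z) 2 μ :=
  (poly_memLtop μ hsuppC R).mono_exponent le_top

lemma polyF_memL2 (μ : Measure ℂ) [IsFiniteMeasure μ] (hsuppC : IsCompact (measSupp μ))
    {F : ℂ → ℂ} (hF : MemLp F 2 μ) (R : Polynomial ℂ) :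
    MemLp (fun z => R.eval z * F z) 2 μ :=
  MemLp.smul (r := 2) hF (poly_memLtop μ hsuppC R)

lemma conj_memL2 (μ : Measure ℂ) {g : ℂ → ℂ} (hg : MemLp g 2 μ) :
    MemLp (fun z => (starRingEnd ℂ) (g z)) 2 μ := by
  refine ⟨(RCLike.continuous_conj (K := ℂ)).comp_aestronglyMeasurable hg.1, ?_⟩
  have : eLpNorm (fun z => (starRingEnd ℂ) (g z)) 2 μ = eLpNorm g 2 μ := eLpNorm_conj g 2 μ
  rw [this]; exact hg.2

lemma integrable_mul_conj (μ : Measure ℂ) {f g : ℂ → ℂ}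
    (hf : MemLp f 2 μ) (hg : MemLp g 2 μ) :
    Integrable (fun z => f z * (starRingEnd ℂ) (g z)) μ := by
  have h : MemLp (f • fun z => (starRingEnd ℂ) (g z)) 1 μ :=
    (conj_memL2 μ hg).smul (r := 1) hf
  exact memLp_one_iff_integrable.mp h

lemma innerMu_sub (μ : Measure ℂ) {f g h : ℂ → ℂ}
    (hf : Integrable (fun z => f z * (starRingEnd ℂ) (h z)) μ)
    (hg : Integrable (fun z => g z * (starRingEnd ℂ) (h z)) μ) :
    innerMu μ (fun z => f z - g z) h = innerMu μ f h - innerMu μ g h := by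
  unfold innerMu
  simp_rw [sub_mul]
  exact integral_sub hf hg

lemma innerMu_sum (μ : Measure ℂ) {ι : Type*} (s : Finset ι) (c : ι → ℂ) (g : ι → ℂ → ℂ)
    (h : ℂ → ℂ) (hint : ∀ k ∈ s, Integrable (fun z => g k z * (starRingEnd ℂ) (h z)) μ) :
    innerMu μ (fun z => ∑ k ∈ s, c k * g k z) h = ∑ k ∈ s, c k * innerMu μ (g k) h := by
  unfold innerMu
  simp_rw [Finset.sum_mul, mul_assoc]
  rw [integral_finset_sum s (fun k hk => ((hint k hk).const_mul (c k)))]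
  exact Finset.sum_congr rfl fun k hk => integral_const_mul (c k) _

lemma aux_expand (p : ℕ → Polynomial ℂ) (hdeg : ∀ n : ℕ, (p n).degree = n) :
    ∀ (N : ℕ) (R : Polynomial ℂ), R.degree ≤ (N : WithBot ℕ) →
      ∃ c : ℕ → ℂ, R = ∑ j ∈ Finset.range (N + 1), c j • p j := by
  intro N
  induction N with
  | zero =>
    intro R hR
    have hp0 : (p 0).coeff 0 ≠ 0 := by
      intro h
      have := hdeg 0
      rw [eq_C_of_degree_le_zero (le_of_eq (hdeg 0)), h] at this
      simp at this
    refine ⟨fun _ => R.coeff 0 / (p 0).coeff 0, ?_⟩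
    rw [Finset.sum_range_one, eq_C_of_degree_le_zero (le_of_eq (hdeg 0)),
      eq_C_of_degree_le_zero hR, smul_C, smul_eq_mul]
    simp only [coeff_C_zero]
    rw [div_mul_cancel₀ _ hp0]
  | succ N ih =>
    intro R hR
    have hpN : (p (N+1)).coeff (N+1) ≠ 0 := by
      have hnd : (p (N+1)).natDegree = N + 1 := natDegree_eq_of_degree_eq_some (hdeg (N+1))
      have hne : p (N+1) ≠ 0 := fun h => by
        rw [h, natDegree_zero] at hnd
        exact Nat.succ_ne_zero N hnd.symm
      have hl := leadingCoeff_ne_zero.mpr hne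
      rwa [leadingCoeff, hnd] at hl
    set d := R.coeff (N+1) / (p (N+1)).coeff (N+1) with hd
    have hdegsub : (R - d • p (N+1)).degree ≤ (N : WithBot ℕ) := by
      rw [degree_le_iff_coeff_zero]
      intro k hk
      have hk' : N < k := by exact_mod_cast hk
      rcases eq_or_lt_of_le (Nat.succ_le_of_lt hk') with h | h
      · rw [coeff_sub, coeff_smul, ← h, smul_eq_mul, hd, div_mul_cancel₀ _ hpN, sub_self]
      · rw [coeff_sub, coeff_smul]
        have h1 : R.coeff k = 0 := by
          apply coeff_eq_zero_of_degree_lt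
          exact lt_of_le_of_lt hR (by exact_mod_cast h)
        have h2 : (p (N+1)).coeff k = 0 := by
          apply coeff_eq_zero_of_degree_lt
          rw [hdeg (N+1)]
          exact_mod_cast h
        rw [h1, h2, smul_zero, sub_zero]
    obtain ⟨c, hc⟩ := ih (R - d • p (N+1)) hdegsub
    refine ⟨Function.update c (N+1) d, ?_⟩
    rw [Finset.sum_range_succ, Function.update_self]
    have : ∑ j ∈ Finset.range (N + 1), Function.update c (N+1) d j • p j
        = ∑ j ∈ Finset.range (N + 1), c j • p j := by
      refine Finset.sum_congr rfl fun j hj => ?_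
      rw [Function.update_of_ne (by simp only [Finset.mem_range] at hj; omega)]
    rw [this, ← hc]
    ring

lemma aux_inner_comb (μ : Measure ℂ) [IsFiniteMeasure μ] (hsuppC : IsCompact (measSupp μ))
    (p : ℕ → Polynomial ℂ)
    (horth : ∀ n k : ℕ,
      innerMu μ (fun z => (p n).eval z) (fun z => (p k).eval z) = if n = k then 1 else 0)
    (c : ℕ → ℂ) (N k : ℕ) :
    innerMu μ (fun z => (∑ j ∈ Finset.range (N+1), c j • p j).eval z) (fun z => (p k).eval z)
      = if k ≤ N then c k else 0 := by
  have hev : (fun z => (∑ j ∈ Finset.range (N+1), c j • p j).eval z)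
      = fun z => ∑ j ∈ Finset.range (N+1), c j * (p j).eval z := by
    funext z
    simp [eval_finset_sum]
  rw [hev, innerMu_sum μ _ c (fun j z => (p j).eval z) _
    (fun j _ => integrable_mul_conj μ (poly_memL2 μ hsuppC (p j)) (poly_memL2 μ hsuppC (p k)))]
  simp only [horth, mul_ite, mul_one, mul_zero, Finset.sum_ite_eq', Finset.mem_range,
    Nat.lt_succ_iff]

lemma aux_inner_high (μ : Measure ℂ) [IsFiniteMeasure μ] (hsuppC : IsCompact (measSupp μ))
    (p : ℕ → Polynomial ℂ) (hdeg : ∀ n : ℕ, (p n).degree = n)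
    (horth : ∀ n k : ℕ,
      innerMu μ (fun z => (p n).eval z) (fun z => (p k).eval z) = if n = k then 1 else 0)
    (R : Polynomial ℂ) (N k : ℕ) (hR : R.degree ≤ (N : WithBot ℕ)) (hk : N < k) :
    innerMu μ (fun z => R.eval z) (fun z => (p k).eval z) = 0 := by
  obtain ⟨c, hc⟩ := aux_expand p hdeg N R hR
  rw [hc, aux_inner_comb μ hsuppC p horth c N k, if_neg (by omega)]

lemma aux_eq_zero (μ : Measure ℂ) [IsFiniteMeasure μ] (hsuppC : IsCompact (measSupp μ))
    (p : ℕ → Polynomial ℂ) (hdeg : ∀ n : ℕ, (p n).degree = n)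
    (horth : ∀ n k : ℕ,
      innerMu μ (fun z => (p n).eval z) (fun z => (p k).eval z) = if n = k then 1 else 0)
    (R : Polynomial ℂ) (N : ℕ) (hR : R.degree ≤ (N : WithBot ℕ))
    (h0 : ∀ j : ℕ, j ≤ N → innerMu μ (fun z => R.eval z) (fun z => (p j).eval z) = 0) :
    R = 0 := by
  obtain ⟨c, hc⟩ := aux_expand p hdeg N R hR
  rw [hc]
  refine Finset.sum_eq_zero fun j hj => ?_
  have hjN : j ≤ N := by simpa [Nat.lt_succ_iff] using hj
  have := h0 j hjN
  rw [hc, aux_inner_comb μ hsuppC p horth c N j, if_pos hjN] at this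
  rw [this, zero_smul]

lemma coeff_sum_CX (f : ℕ → ℂ) (N k : ℕ) :
    (∑ i ∈ Finset.range N, C (f i) * X ^ i).coeff k = if k < N then f k else 0 := by
  rw [finset_sum_coeff]
  simp_rw [coeff_C_mul, coeff_X_pow, mul_ite, mul_one, mul_zero]
  simp [Finset.sum_ite_eq, Finset.mem_range]

lemma aux_QF (μ : Measure ℂ) [IsFiniteMeasure μ] (hsuppC : IsCompact (measSupp μ))
    {F : ℂ → ℂ} (hF : MemLp F 2 μ) (p : ℕ → Polynomial ℂ)
    (Q : Polynomial ℂ) (M : ℕ) (hQ : Q.natDegree < M + 1) (j : ℕ) :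
    innerMu μ (fun z => Q.eval z * F z) (fun z => (p j).eval z)
      = ∑ k ∈ Finset.range (M+1),
          Q.coeff k * innerMu μ (fun z => z^k * F z) (fun z => (p j).eval z) := by
  have hev : (fun z => Q.eval z * F z)
      = fun z => ∑ k ∈ Finset.range (M+1), Q.coeff k * (z^k * F z) := by
    funext z
    rw [eval_eq_sum_range' hQ z, Finset.sum_mul]
    simp [mul_assoc]
  rw [hev, innerMu_sum μ _ _ (fun k z => z^k * F z) _ (fun k _ => ?_)]
  have hmem : MemLp (fun z => z^k * F z) 2 μ := by
    have h1 := polyF_memL2 μ hsuppC hF (X^k)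
    have h2 : (fun z : ℂ => eval z (X ^ k) * F z) = fun z => z ^ k * F z := by
      funext z
      simp [eval_pow]
    rwa [h2] at h1
  exact integrable_mul_conj μ hmem (poly_memL2 μ hsuppC (p j))

lemma innerMu_const_mul (μ : Measure ℂ) (c : ℂ) (f h : ℂ → ℂ) :
    innerMu μ (fun z => c * f z) h = c * innerMu μ f h := by
  unfold innerMu
  simp_rw [mul_assoc]
  exact integral_const_mul c _


/-- Let `F ∈ L²(μ)` and `n, m ≥ 0` with `Δ_{n,m}(F,μ) ≠ 0`. Then there exists a solution
`(P,Q)` of the `(n,m)` Padé-orthogonal problem for `F` with `Q` monic of degree `m`, this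
pair is unique, and any other solution `(P',Q')` satisfies `P'·Q = P·Q'` (it determines the
same rational function `[n/m]_F^μ = P/Q`). -/
theorem pade_unique_of_delta_ne_zero
    (μ : Measure ℂ) [IsFiniteMeasure μ]
    (hsuppInf : (measSupp μ).Infinite) (hsuppC : IsCompact (measSupp μ))
    (p : ℕ → Polynomial ℂ)
    (hdeg : ∀ n : ℕ, (p n).degree = n)
    (hlead : ∀ n : ℕ, 0 < ((p n).leadingCoeff).re ∧ ((p n).leadingCoeff).im = 0)
    (horth : ∀ n k : ℕ,
      innerMu μ (fun z => (p n).eval z) (fun z => (p k).eval z) = if n = k then 1 else 0)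
    (F : ℂ → ℂ) (hF : MemLp F 2 μ) (n m : ℕ) (hΔ : Delta μ p F n m ≠ 0) :
    ∃ P Q : Polynomial ℂ,
      IsPadeSol μ p F n m P Q ∧ Q.Monic ∧ Q.degree = m ∧
      (∀ P' Q' : Polynomial ℂ,
        IsPadeSol μ p F n m P' Q' ∧ Q'.Monic ∧ Q'.degree = m → P' = P ∧ Q' = Q) ∧
      (∀ P' Q' : Polynomial ℂ, IsPadeSol μ p F n m P' Q' → P' * Q = P * Q') := by
  classical
  set M : Matrix (Fin m) (Fin m) ℂ := Matrix.of fun i j : Fin m =>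
    innerMu μ (fun z => z ^ (j : ℕ) * F z) (fun z => (p (n + 1 + i)).eval z) with hMdef
  have hdet : M.det ≠ 0 := by unfold Delta at hΔ; exact hΔ
  have hMunit : IsUnit M.det := isUnit_iff_ne_zero.mpr hdet
  set b : Fin m → ℂ :=
    fun i => innerMu μ (fun z => z ^ m * F z) (fun z => (p (n + 1 + i)).eval z) with hbdef
  set q : Fin m → ℂ := -(M⁻¹.mulVec b) with hqdef
  have hMq : M.mulVec q = -b := by
    rw [hqdef, Matrix.mulVec_neg, Matrix.mulVec_mulVec, Matrix.mul_nonsing_inv _ hMunit,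
      Matrix.one_mulVec]
  have hinj : ∀ v w : Fin m → ℂ, M.mulVec v = M.mulVec w → v = w := by
    intro v w h
    have h2 := congrArg (M⁻¹.mulVec ·) h
    simpa [Matrix.mulVec_mulVec, Matrix.nonsing_inv_mul _ hMunit, Matrix.one_mulVec] using h2
  -- the polynomial Q
  set qq : ℕ → ℂ := fun k => if h : k < m then q ⟨k, h⟩ else if k = m then 1 else 0 with hqq
  set Q : Polynomial ℂ := ∑ i ∈ Finset.range (m+1), C (qq i) * X ^ i with hQdef
  have hQcoeff : ∀ k, Q.coeff k = if k < m + 1 then qq k else 0 := fun k => coeff_sum_CX qq (m+1) k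
  have hQm : Q.coeff m = 1 := by
    rw [hQcoeff m, if_pos (Nat.lt_succ_self m), hqq]
    simp
  have hQdegle : Q.degree ≤ (m : WithBot ℕ) := by
    rw [degree_le_iff_coeff_zero]
    intro k hk
    have hk' : m < k := by exact_mod_cast hk
    rw [hQcoeff k, if_neg (by omega)]
  have hQdeg : Q.degree = (m : WithBot ℕ) :=
    le_antisymm hQdegle (le_degree_of_ne_zero (by rw [hQm]; exact one_ne_zero))
  have hQnat : Q.natDegree = m := natDegree_eq_of_degree_eq_some hQdeg
  have hQmonic : Q.Monic := by
    rw [Monic, leadingCoeff, hQnat]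
    exact hQm
  have hQnd : Q.natDegree < m + 1 := by omega
  -- general expansion of ⟨Q''F, p_{n+1+i}⟩
  have hexp : ∀ Q'' : Polynomial ℂ, Q''.natDegree < m + 1 → ∀ i : Fin m,
      innerMu μ (fun z => Q''.eval z * F z) (fun z => (p (n+1+(i:ℕ))).eval z)
        = M.mulVec (fun j => Q''.coeff (j : ℕ)) i + Q''.coeff m * b i := by
    intro Q'' h i
    rw [aux_QF μ hsuppC hF p Q'' m h (n+1+(i:ℕ)), Finset.sum_range_succ]
    congr 1
    have hmv : M.mulVec (fun j => Q''.coeff (j:ℕ)) i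
        = ∑ j : Fin m, Q''.coeff (j:ℕ) *
            innerMu μ (fun z => z ^ (j:ℕ) * F z) (fun z => (p (n+1+(i:ℕ))).eval z) := by
      simp only [Matrix.mulVec, dotProduct, hMdef, Matrix.of_apply]
      exact Finset.sum_congr rfl fun j _ => mul_comm _ _
    rw [hmv, Fin.sum_univ_eq_sum_range (fun k => Q''.coeff k *
      innerMu μ (fun z => z^k * F z) (fun z => (p (n+1+(i:ℕ))).eval z)) m]
  have hqcoe : (fun j : Fin m => Q.coeff (j : ℕ)) = q := by
    funext j
    rw [hQcoeff, if_pos (by omega), hqq]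
    simp [j.isLt]
  have hsys : ∀ i : Fin m,
      innerMu μ (fun z => Q.eval z * F z) (fun z => (p (n+1+(i:ℕ))).eval z) = 0 := by
    intro i
    rw [hexp Q hQnd i, hqcoe, hQm, hMq, one_mul]
    simp
  -- the polynomial P
  set a : ℕ → ℂ := fun j => innerMu μ (fun z => Q.eval z * F z) (fun z => (p j).eval z) with hadef
  set P : Polynomial ℂ := ∑ j ∈ Finset.range (n+1), a j • p j with hPdef
  have hPdeg : P.degree ≤ (n : WithBot ℕ) := by
    refine (degree_sum_le _ _).trans ?_
    refine Finset.sup_le fun j hj => ?_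
    refine (degree_smul_le _ _).trans ?_
    rw [hdeg j]
    exact_mod_cast Nat.lt_succ_iff.mp (Finset.mem_range.mp hj)
  have hPinner : ∀ k : ℕ,
      innerMu μ (fun z => P.eval z) (fun z => (p k).eval z) = if k ≤ n then a k else 0 :=
    fun k => aux_inner_comb μ hsuppC p horth a n k
  -- integrability facts
  have hintQF : ∀ (R : Polynomial ℂ) (j : ℕ),
      Integrable (fun z => R.eval z * F z * (starRingEnd ℂ) ((p j).eval z)) μ :=
    fun R j => integrable_mul_conj μ (polyF_memL2 μ hsuppC hF R) (poly_memL2 μ hsuppC (p j))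
  have hintPP : ∀ (R : Polynomial ℂ) (j : ℕ),
      Integrable (fun z => R.eval z * (starRingEnd ℂ) ((p j).eval z)) μ :=
    fun R j => integrable_mul_conj μ (poly_memL2 μ hsuppC R) (poly_memL2 μ hsuppC (p j))
  have hQF0 : ∀ j : ℕ, n < j → j ≤ n + m →
      innerMu μ (fun z => Q.eval z * F z) (fun z => (p j).eval z) = 0 := by
    intro j h1 h2
    have hi : j - (n+1) < m := by omega
    have hji : j = n + 1 + ((⟨j - (n+1), hi⟩ : Fin m) : ℕ) := by simp; omega
    rw [hji]
    exact hsys ⟨j - (n+1), hi⟩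
  have hsol : IsPadeSol μ p F n m P Q := by
    refine ⟨hPdeg, hQdegle, hQmonic.ne_zero, fun j hj => ?_⟩
    rw [innerMu_sub μ (hintQF Q j) (hintPP P j)]
    rcases le_or_gt j n with h | h
    · rw [hPinner j, if_pos h]
      exact sub_self _
    · rw [hPinner j, if_neg (by omega), hQF0 j h hj, sub_zero]
  -- the general uniqueness statement
  have huniq : ∀ P' Q' : Polynomial ℂ, IsPadeSol μ p F n m P' Q' →
      Q' = Q'.coeff m • Q ∧ P' = Q'.coeff m • P ∧ Q'.coeff m ≠ 0 := by
    intro P' Q' hsol'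
    obtain ⟨hP'deg, hQ'deg, hQ'ne, hcond⟩ := hsol'
    have hQ'nd : Q'.natDegree < m + 1 := by
      have := natDegree_le_iff_degree_le.mpr hQ'deg
      omega
    set c' : ℂ := Q'.coeff m with hc'
    -- ⟨Q'F, p_{n+1+i}⟩ = 0
    have hsys' : ∀ i : Fin m,
        innerMu μ (fun z => Q'.eval z * F z) (fun z => (p (n+1+(i:ℕ))).eval z) = 0 := by
      intro i
      have hj : n + 1 + (i : ℕ) ≤ n + m := by omega
      have h1 := hcond (n+1+(i:ℕ)) hj
      rw [innerMu_sub μ (hintQF Q' _) (hintPP P' _)] at h1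
      have h2 : innerMu μ (fun z => P'.eval z) (fun z => (p (n+1+(i:ℕ))).eval z) = 0 :=
        aux_inner_high μ hsuppC p hdeg horth P' n _ hP'deg (by omega)
      rw [h2, sub_zero] at h1
      exact h1
    have hvec : M.mulVec (fun j => Q'.coeff (j : ℕ)) = M.mulVec (c' • q) := by
      funext i
      have h1 := hsys' i
      rw [hexp Q' hQ'nd i] at h1
      rw [Matrix.mulVec_smul]
      have : (M.mulVec q) i = - b i := by rw [hMq]; simp
      rw [Pi.smul_apply, this]
      rw [← hc'] at h1
      simp only [smul_eq_mul]
      linear_combination h1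
    have hcoe : (fun j : Fin m => Q'.coeff (j : ℕ)) = c' • q := hinj _ _ hvec
    have hc'ne : c' ≠ 0 := by
      intro h0
      apply hQ'ne
      ext k
      rcases lt_trichotomy k m with hk | hk | hk
      · have := congrFun hcoe ⟨k, hk⟩
        simp only [Pi.smul_apply, h0, zero_smul] at this
        simpa using this
      · rw [hk, ← hc', h0]; simp
      · rw [coeff_eq_zero_of_degree_lt (lt_of_le_of_lt hQ'deg (by exact_mod_cast hk))]
        simp
    have hQ'eq : Q' = c' • Q := by
      ext k
      rw [coeff_smul]
      rcases lt_trichotomy k m with hk | hk | hk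
      · have := congrFun hcoe ⟨k, hk⟩
        simp only [Pi.smul_apply, smul_eq_mul] at this ⊢
        rw [this]
        congr 1
        rw [hQcoeff, if_pos (by omega), hqq]
        simp [hk]
      · rw [hk, ← hc', hQm]; simp
      · rw [coeff_eq_zero_of_degree_lt (lt_of_le_of_lt hQ'deg (by exact_mod_cast hk)),
          coeff_eq_zero_of_degree_lt (lt_of_le_of_lt hQdegle (by exact_mod_cast hk))]
        simp
    -- P' = c' • P
    have hQ'F : ∀ j : ℕ, innerMu μ (fun z => Q'.eval z * F z) (fun z => (p j).eval z)
        = c' * innerMu μ (fun z => Q.eval z * F z) (fun z => (p j).eval z) := by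
      intro j
      have : (fun z => Q'.eval z * F z) = fun z => c' * (Q.eval z * F z) := by
        funext z
        rw [hQ'eq]
        simp [mul_assoc]
      rw [this, innerMu_const_mul]
    have hP'inner : ∀ j : ℕ, j ≤ n →
        innerMu μ (fun z => P'.eval z) (fun z => (p j).eval z)
          = c' * innerMu μ (fun z => P.eval z) (fun z => (p j).eval z) := by
      intro j hjn
      have h1 := hcond j (by omega)
      rw [innerMu_sub μ (hintQF Q' _) (hintPP P' _), sub_eq_zero] at h1
      have h2 := (hsol.2.2.2) j (by omega)
      rw [innerMu_sub μ (hintQF Q _) (hintPP P _), sub_eq_zero] at h2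
      rw [← h1, hQ'F j, h2]
    have hP'eq : P' = c' • P := by
      have hR : (P' - c' • P) = 0 := by
        apply aux_eq_zero μ hsuppC p hdeg horth _ n
        · exact (degree_sub_le _ _).trans (max_le hP'deg ((degree_smul_le _ _).trans hPdeg))
        · intro j hjn
          have heval : (fun z => (P' - c' • P).eval z)
              = fun z => P'.eval z - c' * P.eval z := by
            funext z
            simp
          have hint2 : Integrable (fun z => c' * P.eval z * (starRingEnd ℂ) ((p j).eval z)) μ := by
            simp_rw [mul_assoc]
            exact (hintPP P j).const_mul c'
          rw [heval, innerMu_sub μ (hintPP P' j) hint2, innerMu_const_mul,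
            hP'inner j hjn, sub_self]
      have := sub_eq_zero.mp hR
      exact this
    exact ⟨hQ'eq, hP'eq, hc'ne⟩
  refine ⟨P, Q, hsol, hQmonic, hQdeg, ?_, ?_⟩
  · rintro P' Q' ⟨hsol', hmon', hdeg'⟩
    obtain ⟨hQ'eq, hP'eq, hc'ne⟩ := huniq P' Q' hsol'
    have hc1 : Q'.coeff m = 1 := by
      have : Q'.natDegree = m := natDegree_eq_of_degree_eq_some hdeg'
      rw [← this]
      exact hmon'
    rw [hc1, one_smul] at hQ'eq hP'eq
    exact ⟨hP'eq, hQ'eq⟩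
  · intro P' Q' hsol'
    obtain ⟨hQ'eq, hP'eq, hc'ne⟩ := huniq P' Q' hsol'
    rw [hQ'eq, hP'eq, smul_mul_assoc, mul_smul_comm]
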